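/- Let y : ↑↑ → Ĉ(↑↑) be the Yoneda embedding regarded as a representation. For any directed graph G, the 0-component φ₀^{y,G} of the interface transformation is a bijection, and the 1-component φ₁^{y,G} is a map into a one-element set (since Int_y(1) is the empty presheaf, which is initial); hence the induced equivalence relation ∼_y on the arc set G(1) is the total relation G(1) × G(1). -/

import Mathlib

open CategoryTheory Limits Opposite WalkingParallelPair WalkingParallelPairHom

universe v w

section Machinery

variable {C : Type} [SmallCategory C] {D : Type w} [Category.{v} D]

/-- The diagram `Elts(G) → C → D` whose colimit is `G ⊗ M`. -/
def elemDiagram (M : C ⥤ D) (G : Cᵒᵖ ⥤ Type) : G.Elementsᵒᵖ ⥤ D :=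
  (CategoryOfElements.π G).leftOp ⋙ M

/-- `G ⊗ M`, the left Kan extension of `M` along Yoneda evaluated at `G`, computed as the
colimit of `M` over the category of elements of `G`. -/
noncomputable def tensorObj (M : C ⥤ D) (G : Cᵒᵖ ⥤ Type)
    [HasColimitsOfShape G.Elementsᵒᵖ D] : D :=
  colimit (elemDiagram M G)

/-- The colimit injection `μ^{M,G}_{(c,x)} : M(c) ⟶ G ⊗ M`. -/
noncomputable def tensorι (M : C ⥤ D) (G : Cᵒᵖ ⥤ Type)
    [HasColimitsOfShape G.Elementsᵒᵖ D] (c : C) (x : G.obj (op c)) :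
    M.obj c ⟶ tensorObj M G :=
  colimit.ι (elemDiagram M G) (op ⟨op c, x⟩)

/-- The diagram `Elts(y(c)) ≅ Over c → C → D` whose limit is the interface `Int_M(c)`. -/
def overDiagram (M : C ⥤ D) (c : C) : Over c ⥤ D :=
  Over.forget c ⋙ M

/-- The interface `Int_M(c)` of a representation `M` at `c`. -/
noncomputable def interfaceObj (M : C ⥤ D) [∀ c : C, HasLimitsOfShape (Over c) D] (c : C) : D :=
  limit (overDiagram M c)

/-- The limit projection `ν^{M,c}_{(c',f)} : Int_M(c) ⟶ M(c')`. -/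
noncomputable def interfaceπ (M : C ⥤ D) [∀ c : C, HasLimitsOfShape (Over c) D]
    {c' c : C} (f : c' ⟶ c) : interfaceObj M c ⟶ M.obj c' :=
  limit.π (overDiagram M c) (Over.mk f)

/-- The interface transformation `φ^{M,G}_c : G(c) → Hom_D(Int_M(c), G ⊗ M)`,
`x ↦ μ^{M,G}_{(c,x)} ∘ ν^{M,c}_{(c,id_c)}`. -/
noncomputable def interfaceTrans (M : C ⥤ D) (G : Cᵒᵖ ⥤ Type)
    [HasColimitsOfShape G.Elementsᵒᵖ D] [∀ c : C, HasLimitsOfShape (Over c) D]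
    (c : C) (x : G.obj (op c)) : interfaceObj M c ⟶ tensorObj M G :=
  interfaceπ M (𝟙 c) ≫ tensorι M G c x

end Machinery

/-- `Over.mk (𝟙 zero)` is initial in `Over zero`. -/
noncomputable def overZeroInitial : IsInitial (Over.mk (𝟙 zero)) :=
  IsInitial.ofUniqueHom
    (fun Y => by
      obtain ⟨l, ⟨⟨⟩⟩, f⟩ := Y
      change WalkingParallelPairHom l zero at f
      cases f
      exact Over.homMk (𝟙 zero))
    (fun Y m => by
      obtain ⟨l, ⟨⟨⟩⟩, f⟩ := Y
      change WalkingParallelPairHom l zero at f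
      cases f
      ext
      have h : m.left = 𝟙 zero := by
        have hg : ∀ g : WalkingParallelPairHom zero zero, g = 𝟙 zero := fun g => by cases g; rfl
        exact hg _
      simp [h]; rfl)

theorem interfaceZero_pi_isIso :
    IsIso (interfaceπ (yoneda (C := WalkingParallelPair)) (𝟙 zero)) := by
  let F := overDiagram (yoneda (C := WalkingParallelPair)) zero
  let i := IsLimit.conePointUniqueUpToIso (limit.isLimit F)
    (limitOfDiagramInitial overZeroInitial F)
  have h : i.hom ≫ (coneOfDiagramInitial overZeroInitial F).π.app (Over.mk (𝟙 zero)) =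
      limit.π F (Over.mk (𝟙 zero)) :=
    IsLimit.conePointUniqueUpToIso_hom_comp _ _ _
  have h2 : (coneOfDiagramInitial overZeroInitial F).π.app (Over.mk (𝟙 zero)) = 𝟙 _ := by
    dsimp [coneOfDiagramInitial]
    rw [overZeroInitial.hom_ext (overZeroInitial.to _) (𝟙 _)]
    simp
  have : interfaceπ (yoneda (C := WalkingParallelPair)) (𝟙 zero) = i.hom := by
    rw [interfaceπ, ← h, h2]; exact Category.comp_id _
  rw [this]
  exact i.isIso_hom

/-- `Int_y(1)` is the empty presheaf. -/
theorem interfaceOne_empty (X : WalkingParallelPairᵒᵖ)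
    (t : (interfaceObj (yoneda (C := WalkingParallelPair)) one).obj X) : False := by
  let F := overDiagram (yoneda (C := WalkingParallelPair)) one
  obtain ⟨x⟩ := X
  cases x with
  | one =>
    exact (by cases ((limit.π F (Over.mk left)).app (op one) t :
      (one : WalkingParallelPair) ⟶ zero))
  | zero =>
    have a : ((zero : WalkingParallelPair) ⟶ zero) := (limit.π F (Over.mk left)).app (op zero) t
    have ha : (limit.π F (Over.mk left)).app (op zero) t = 𝟙 zero := by
      cases h : (limit.π F (Over.mk left)).app (op zero) t; rfl
    have hb : (limit.π F (Over.mk right)).app (op zero) t = 𝟙 zero := by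
      cases h : (limit.π F (Over.mk right)).app (op zero) t; rfl
    let φL : Over.mk left ⟶ Over.mk (𝟙 one) := Over.homMk left
    let φR : Over.mk right ⟶ Over.mk (𝟙 one) := Over.homMk right
    have hL := congr_fun (congrArg (fun α => α.app (op zero)) (limit.w F φL)) t
    have hR := congr_fun (congrArg (fun α => α.app (op zero)) (limit.w F φR)) t
    simp only [FunctorToTypes.comp] at hL hR
    have : (F.map φL).app (op zero) ((limit.π F (Over.mk left)).app (op zero) t) =
        (F.map φR).app (op zero) ((limit.π F (Over.mk right)).app (op zero) t) := by
      exact hL.trans hR.symm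
    rw [ha, hb] at this
    have : (left : (zero : WalkingParallelPair) ⟶ one) = right := by
      change 𝟙 zero ≫ left = 𝟙 zero ≫ right at this
      simpa using this
    cases this


/-- For the Yoneda embedding regarded as a representation of `↑↑` and any
directed graph `G`: the 0-component of the interface transformation `φ^{y,G}` is a bijection;
the 1-component lands in a one-element set (`Int_y(1)` being the empty presheaf, which is
initial); hence the induced equivalence relation on arcs is the total relation. -/
theorem statement10 (G : WalkingParallelPairᵒᵖ ⥤ Type) :
    Function.Bijective (fun x : G.obj (op zero) =>
      interfaceTrans yoneda G zero x) ∧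
    Subsingleton (interfaceObj (yoneda (C := WalkingParallelPair)) one ⟶ tensorObj yoneda G) ∧
    ∀ x y : G.obj (op one), interfaceTrans yoneda G one x = interfaceTrans yoneda G one y := by
  have hsub : Subsingleton
      (interfaceObj (yoneda (C := WalkingParallelPair)) one ⟶ tensorObj yoneda G) := by
    constructor
    intro f g
    ext X x
    exact (interfaceOne_empty X x).elim
  refine ⟨?_, hsub, fun x y => hsub.elim _ _⟩
  -- bijectivity of the 0-component
  haveI := interfaceZero_pi_isIso
  let ν : interfaceObj (yoneda (C := WalkingParallelPair)) zero ≅ yoneda.obj zero :=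
    asIso (interfaceπ yoneda (𝟙 zero))
  let e : tensorObj yoneda G ≅ G :=
    IsColimit.coconePointUniqueUpToIso (colimit.isColimit (elemDiagram yoneda G))
      ((IsColimit.precomposeInvEquiv (NatIso.ofComponents (fun _ => NatIso.ofComponents
        (fun _ => Equiv.ulift.toIso)) : Presheaf.functorToRepresentables.{0} G ≅
          elemDiagram yoneda G) _).symm (Presheaf.colimitOfRepresentable G))
  have key : ∀ x : G.obj (op zero),
      interfaceTrans yoneda G zero x = ν.hom ≫ (yonedaEquiv.symm x ≫ e.inv) := by
    intro x
    have h1 : tensorι yoneda G zero x ≫ e.hom =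
        ((Cocone.precompose (NatIso.ofComponents (fun _ => NatIso.ofComponents
          (fun _ => Equiv.ulift.toIso)) : Presheaf.functorToRepresentables.{0} G ≅
            elemDiagram yoneda G).inv).obj (Presheaf.coconeOfRepresentable G)).ι.app
              (op ⟨op zero, x⟩) :=
      IsColimit.comp_coconePointUniqueUpToIso_hom
        (colimit.isColimit (elemDiagram yoneda G)) _
        (op ⟨op zero, x⟩)
    have h2 : tensorι yoneda G zero x = yonedaEquiv.symm x ≫ e.inv := by
      rw [Iso.eq_comp_inv, h1]; ext Y f; rfl
    rw [interfaceTrans, h2]; rfl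
  have : (fun x : G.obj (op zero) => interfaceTrans yoneda G zero x) =
      ⇑((yonedaEquiv (C := WalkingParallelPair) (X := zero) (F := G)).symm.trans
        (Iso.homCongr ν.symm e.symm)) := by
    funext x
    rw [key x]
    simp [Iso.homCongr]
  rw [this]
  exact Equiv.bijective _
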